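/- Let A, B ⊆ ℝ² be nonempty closed convex cones and let x ∈ ℝ². If the three points x, R_A(x) and R_B(R_A(x)) are pairwise distinct, then they are not collinear, the origin 0 is the unique circumcenter of x with respect to (A, B), and 0 ∈ A ∩ B; hence C_T(x) = 0 is a feasible point. -/

import Mathlib

open RealInnerProductSpace Pointwise

/-- `p` is the metric projection of `x` onto `C`: the point of `C` such that
`⟪y - p, x - p⟫ ≤ 0` for all `y ∈ C`. -/
def IsProj {E : Type*} [NormedAddCommGroup E] [InnerProductSpace ℝ E]
    (C : Set E) (x p : E) : Prop :=
  p ∈ C ∧ ∀ y ∈ C, ⟪y - p, x - p⟫ ≤ 0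

/-- `c` is a circumcenter of `x` with respect to `(A, B)`: writing `R_A x = 2 P_A x - x`
and `R_B (R_A x) = 2 P_B (R_A x) - R_A x`, the point `c` lies in the affine span of
`{x, R_A x, R_B (R_A x)}` and is equidistant from these three points. -/
def IsCircumcenter {E : Type*} [NormedAddCommGroup E] [InnerProductSpace ℝ E]
    (A B : Set E) (x c : E) : Prop :=
  ∃ pa pb : E, IsProj A x pa ∧ IsProj B ((2 : ℝ) • pa - x) pb ∧
    c ∈ affineSpan ℝ
      ({x, (2 : ℝ) • pa - x, (2 : ℝ) • pb - ((2 : ℝ) • pa - x)} : Set E) ∧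
    ‖c - x‖ = ‖c - ((2 : ℝ) • pa - x)‖ ∧
    ‖c - x‖ = ‖c - ((2 : ℝ) • pb - ((2 : ℝ) • pa - x))‖

/-- Uniqueness of the metric projection. -/
lemma isProj_unique {E : Type*} [NormedAddCommGroup E] [InnerProductSpace ℝ E]
    {C : Set E} {x p q : E} (hp : IsProj C x p) (hq : IsProj C x q) : p = q := by
  have h1 := hp.2 q hq.1
  have h2 := hq.2 p hp.1
  have key : ⟪q - p, q - p⟫ = ⟪q - p, x - p⟫ + ⟪p - q, x - q⟫ := by
    simp only [inner_sub_left, inner_sub_right]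
    ring
  have : ⟪q - p, q - p⟫ ≤ 0 := by linarith
  exact (sub_eq_zero.1 (real_inner_self_nonpos.1 this)).symm

/-- Orthogonality of the projection onto a cone. -/
lemma cone_proj_orth {E : Type*} [NormedAddCommGroup E] [InnerProductSpace ℝ E]
    {C : Set E} (hcone : ∀ l : ℝ, 0 ≤ l → ∀ y ∈ C, l • y ∈ C)
    {x p : E} (hp : IsProj C x p) : ⟪p, x - p⟫ = 0 := by
  have h0 : (0 : E) ∈ C := by
    simpa using hcone 0 le_rfl p hp.1
  have h2 : (2 : ℝ) • p ∈ C := hcone 2 (by norm_num) p hp.1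
  have k0 := hp.2 0 h0
  have k2 := hp.2 ((2 : ℝ) • p) h2
  have e0 : ⟪(0 : E) - p, x - p⟫ = -⟪p, x - p⟫ := by
    simp [inner_sub_left]
  have e2 : ⟪(2 : ℝ) • p - p, x - p⟫ = ⟪p, x - p⟫ := by
    have : (2 : ℝ) • p - p = p := by
      rw [two_smul]; abel
    rw [this]
  rw [e0] at k0
  rw [e2] at k2
  linarith

/-- Norm preservation of reflection in a cone: `‖2•p - x‖ = ‖x‖`. -/
lemma reflect_norm {E : Type*} [NormedAddCommGroup E] [InnerProductSpace ℝ E]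
    {x p : E} (h : ⟪p, x - p⟫ = 0) : ‖(2 : ℝ) • p - x‖ = ‖x‖ := by
  have hpx : ⟪p, x⟫ = ‖p‖ ^ 2 := by
    have := h
    rw [inner_sub_right] at this
    rw [real_inner_self_eq_norm_sq] at this
    linarith
  have hsq : ‖(2 : ℝ) • p - x‖ ^ 2 = ‖x‖ ^ 2 := by
    rw [norm_sub_sq_real, norm_smul, real_inner_smul_left]
    simp only [Real.norm_ofNat]
    nlinarith
  have h1 : (0 : ℝ) ≤ ‖(2 : ℝ) • p - x‖ := norm_nonneg _
  have h2 : (0 : ℝ) ≤ ‖x‖ := norm_nonneg _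
  nlinarith

/-- Let `A, B ⊆ ℝ²` be nonempty closed convex cones, `x ∈ ℝ²`, `pa = P_A x`,
`pb = P_B (R_A x)`. If the three points `x`, `R_A x` and `R_B (R_A x)` are pairwise distinct,
then they are not collinear, the origin is the unique circumcenter of `x` with respect to
`(A, B)`, and `0 ∈ A ∩ B`. -/
theorem crm_cones_R2_distinct_circumcenter_zero
    (A B : Set (EuclideanSpace ℝ (Fin 2)))
    (hAne : A.Nonempty) (hAcl : IsClosed A) (hAcv : Convex ℝ A)
    (hAcone : ∀ l : ℝ, 0 ≤ l → ∀ y ∈ A, l • y ∈ A)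
    (hBne : B.Nonempty) (hBcl : IsClosed B) (hBcv : Convex ℝ B)
    (hBcone : ∀ l : ℝ, 0 ≤ l → ∀ y ∈ B, l • y ∈ B)
    (x pa pb : EuclideanSpace ℝ (Fin 2))
    (hpa : IsProj A x pa) (hpb : IsProj B ((2 : ℝ) • pa - x) pb)
    (h₁ : x ≠ (2 : ℝ) • pa - x)
    (h₂ : x ≠ (2 : ℝ) • pb - ((2 : ℝ) • pa - x))
    (h₃ : (2 : ℝ) • pa - x ≠ (2 : ℝ) • pb - ((2 : ℝ) • pa - x)) :
    ¬ Collinear ℝ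
        ({x, (2 : ℝ) • pa - x, (2 : ℝ) • pb - ((2 : ℝ) • pa - x)} :
          Set (EuclideanSpace ℝ (Fin 2))) ∧
    IsCircumcenter A B x 0 ∧
    (∀ c : EuclideanSpace ℝ (Fin 2), IsCircumcenter A B x c → c = 0) ∧
    (0 : EuclideanSpace ℝ (Fin 2)) ∈ A ∩ B := by
  set u : EuclideanSpace ℝ (Fin 2) := (2 : ℝ) • pa - x with hu
  set w : EuclideanSpace ℝ (Fin 2) := (2 : ℝ) • pb - u with hw
  have h0A : (0 : EuclideanSpace ℝ (Fin 2)) ∈ A := by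
    simpa using hAcone 0 le_rfl pa hpa.1
  have h0B : (0 : EuclideanSpace ℝ (Fin 2)) ∈ B := by
    simpa using hBcone 0 le_rfl pb hpb.1
  have nu : ‖u‖ = ‖x‖ := reflect_norm (cone_proj_orth hAcone hpa)
  have nw : ‖w‖ = ‖u‖ := reflect_norm (cone_proj_orth hBcone hpb)
  have hS : ({x, u, w} : Set (EuclideanSpace ℝ (Fin 2))).Nonempty := ⟨x, by simp⟩
  -- not collinear
  have hnc : ¬ Collinear ℝ ({x, u, w} : Set (EuclideanSpace ℝ (Fin 2))) := by
    intro hcol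
    have hwmem : w ∈ line[ℝ, x, u] :=
      hcol.mem_affineSpan_of_mem_of_ne (by simp) (by simp) (by simp) h₁
    have hwmem' : (w - x) +ᵥ x ∈ line[ℝ, x, u] := by
      simpa [vadd_eq_add, sub_add_cancel] using hwmem
    obtain ⟨t, ht⟩ := vadd_left_mem_affineSpan_pair.1 hwmem'
    rw [vsub_eq_sub] at ht
    have hweq : w = t • (u - x) + x := by
      rw [ht]; abel
    have hdne : ‖u - x‖ ≠ 0 := by
      simp only [ne_eq, norm_eq_zero, sub_eq_zero]
      exact fun h => h₁ h.symm
    have hd2 : (0 : ℝ) < ‖u - x‖ ^ 2 := by positivity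
    have e1 : ‖u - x‖ ^ 2 + 2 * ⟪u - x, x⟫ = 0 := by
      have : ‖(u - x) + x‖ ^ 2 = ‖x‖ ^ 2 := by rw [sub_add_cancel, nu]
      rw [norm_add_sq_real] at this
      linarith
    have e2 : t ^ 2 * ‖u - x‖ ^ 2 + 2 * t * ⟪u - x, x⟫ = 0 := by
      have : ‖t • (u - x) + x‖ ^ 2 = ‖x‖ ^ 2 := by
        rw [← hweq, nw, nu]
      rw [norm_add_sq_real, norm_smul, real_inner_smul_left] at this
      have hns : |t| ^ 2 = t ^ 2 := sq_abs t
      rw [mul_pow] at this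
      simp only [Real.norm_eq_abs] at this
      rw [hns] at this
      linarith
    have key : t * (t - 1) * ‖u - x‖ ^ 2 = 0 := by linear_combination e2 - t * e1
    have : t * (t - 1) = 0 := by
      rcases mul_eq_zero.1 key with h | h
      · exact h
      · exact absurd h (by positivity)
    rcases mul_eq_zero.1 this with h | h
    · subst h
      apply h₂
      rw [hweq]; simp
    · have ht1 : t = 1 := by linarith
      subst ht1
      apply h₃
      rw [hweq]; simp
  -- vectorSpan = top
  have hvs : vectorSpan ℝ ({x, u, w} : Set (EuclideanSpace ℝ (Fin 2))) = ⊤ := by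
    by_contra h
    apply hnc
    rw [collinear_iff_finrank_le_one]
    have hlt := Submodule.finrank_lt (K := ℝ) (V := EuclideanSpace ℝ (Fin 2))
      h
    rw [finrank_euclideanSpace_fin] at hlt
    omega
  have hspan : affineSpan ℝ ({x, u, w} : Set (EuclideanSpace ℝ (Fin 2))) = ⊤ := by
    rw [AffineSubspace.affineSpan_eq_top_iff_vectorSpan_eq_top_of_nonempty ℝ _ _ hS]
    exact hvs
  refine ⟨hnc, ?_, ?_, ⟨h0A, h0B⟩⟩
  · exact ⟨pa, pb, hpa, hpb, by rw [← hu, ← hw, hspan]; trivial,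
      by simp [← hu, nu], by simp [← hu, ← hw, nw, nu]⟩
  · rintro c ⟨pa', pb', hpa', hpb', hmem, heq1, heq2⟩
    have hpaeq : pa' = pa := isProj_unique hpa' hpa
    subst hpaeq
    have hpbeq : pb' = pb := isProj_unique hpb' hpb
    subst hpbeq
    rw [← hw] at heq2
    have i1 : ⟪c, u⟫ = ⟪c, x⟫ := by
      have hsq : ‖c - x‖ ^ 2 = ‖c - u‖ ^ 2 := by rw [heq1]
      rw [norm_sub_sq_real, norm_sub_sq_real, nu] at hsq
      linarith
    have i2 : ⟪c, w⟫ = ⟪c, x⟫ := by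
      have hsq : ‖c - x‖ ^ 2 = ‖c - w‖ ^ 2 := by rw [heq2]
      rw [norm_sub_sq_real, norm_sub_sq_real, nw, nu] at hsq
      linarith
    have hker : vectorSpan ℝ ({x, u, w} : Set (EuclideanSpace ℝ (Fin 2)))
        ≤ LinearMap.ker (innerSL ℝ c).toLinearMap := by
      rw [vectorSpan_def]
      rw [Submodule.span_le]
      rintro v hv
      rw [Set.mem_vsub] at hv
      obtain ⟨a, ha, b, hb, rfl⟩ := hv
      simp only [SetLike.mem_coe, LinearMap.mem_ker, ContinuousLinearMap.coe_coe,
        innerSL_apply_apply, vsub_eq_sub, inner_sub_right]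
      simp only [Set.mem_insert_iff, Set.mem_singleton_iff] at ha hb
      rcases ha with rfl | rfl | rfl <;> rcases hb with rfl | rfl | rfl <;> linarith
    have hcc : ⟪c, c⟫ = 0 := by
      have : c ∈ LinearMap.ker (innerSL ℝ c).toLinearMap := by
        apply hker
        rw [hvs]; trivial
      simpa using this
    exact inner_self_eq_zero.1 hcc
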